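/- On the genus-two curve C: y^2 = 12x^5 - 322x^4 + 3208x^3 - 14438x^2 + 27980x - 16079, the twelve points (1,19), (2,55), (3,37), (4,1), (5,11), (6,31), (7,35), (8,23), (9,29), (10,89), (11,181), (12,305) all lie on C; in particular their x-coordinates 1,2,...,12 form an arithmetic progression of length 12. -/

import Mathlib

def ulasF (x : ℚ) : ℚ := 12*x^5 - 322*x^4 + 3208*x^3 - 14438*x^2 + 27980*x - 16079

def ulasPts : List (ℚ × ℚ) :=
  [(1, 19), (2, 55), (3, 37), (4, 1), (5, 11), (6, 31), (7, 35),
   (8, 23), (9, 29), (10, 89), (11, 181), (12, 305)]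

theorem twelve_points_in_AP_on_genus_two_curve :
    (∀ P ∈ ulasPts, P.2 ^ 2 = ulasF P.1) ∧
    ulasPts.length = 12 ∧
    (∀ k : ℕ, k < 12 → (ulasPts[k]!).1 = 1 + k) := by
  refine ⟨?_, rfl, ?_⟩
  · intro P hP
    simp only [ulasPts, List.mem_cons, List.not_mem_nil, or_false] at hP
    rcases hP with h|h|h|h|h|h|h|h|h|h|h|h <;> subst h <;> norm_num [ulasF]
  · intro k hk
    interval_cases k <;> norm_num [ulasPts]
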